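/- Let n ≥ 2, let M = [m_{ij}] be an n×n real B-Nekrasov matrix with decomposition M = B⁺ + C, where B⁺ = [b_{ij}], let q ∈ ℝⁿ, and let x* be a solution of LCP(M,q). Then for every x ∈ ℝⁿ, ‖x − x*‖_∞ ≤ (max_{1 ≤ i ≤ n} (n − 1) η_i(B⁺)/min{b_{ii} − h_i(B⁺), 1}) · ‖r(x)‖_∞. -/

import Mathlib

open Finset

noncomputable def nekH {n : ℕ} {𝕜 : Type*} [RCLike 𝕜] (A : Matrix (Fin n) (Fin n) 𝕜) : Fin n → ℝ
  | i =>
    (∑ j : Fin n, if h : j < i then ‖A i j‖ / ‖A j j‖ * nekH A j else 0)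
      + ∑ j : Fin n, if i < j then ‖A i j‖ else 0
termination_by i => i.val
decreasing_by exact h

def IsNekrasov {n : ℕ} {𝕜 : Type*} [RCLike 𝕜] (A : Matrix (Fin n) (Fin n) 𝕜) : Prop :=
  ∀ i, nekH A i < ‖A i i‖

noncomputable def nekZ {n : ℕ} {𝕜 : Type*} [RCLike 𝕜] (A : Matrix (Fin n) (Fin n) 𝕜) : Fin n → ℝ
  | i => (∑ j : Fin n, if h : j < i then ‖A i j‖ / ‖A j j‖ * nekZ A j else 0) + 1
termination_by i => i.val
decreasing_by exact h

noncomputable def nekEta {n : ℕ} {𝕜 : Type*} [RCLike 𝕜] (M : Matrix (Fin n) (Fin n) 𝕜) : Fin n → ℝ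
  | i => (∑ j : Fin n, if h : j < i then ‖M i j‖ / min ‖M j j‖ 1 * nekEta M j else 0) + 1
termination_by i => i.val
decreasing_by exact h

noncomputable def linftyNorm {n : ℕ} {𝕜 : Type*} [RCLike 𝕜] (A : Matrix (Fin n) (Fin n) 𝕜) : ℝ :=
  ⨆ i, ∑ j, ‖A i j‖

noncomputable def rPlus {n : ℕ} (M : Matrix (Fin n) (Fin n) ℝ) (i : Fin n) : ℝ :=
  Finset.fold max 0 (fun j => M i j) (Finset.univ.erase i)

noncomputable def BPlus {n : ℕ} (M : Matrix (Fin n) (Fin n) ℝ) : Matrix (Fin n) (Fin n) ℝ :=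
  Matrix.of fun i j => M i j - rPlus M i

def IsBNekrasov {n : ℕ} (M : Matrix (Fin n) (Fin n) ℝ) : Prop :=
  IsNekrasov (BPlus M) ∧ ∀ i, 0 < BPlus M i i

def IsLCPSolution {n : ℕ} (M : Matrix (Fin n) (Fin n) ℝ) (q x : Fin n → ℝ) : Prop :=
  (∀ i, 0 ≤ x i) ∧ (∀ i, 0 ≤ (M.mulVec x + q) i) ∧ ∑ i, (M.mulVec x + q) i * x i = 0

def IsPMatrix {n : ℕ} (M : Matrix (Fin n) (Fin n) ℝ) : Prop :=
  ∀ S : Finset (Fin n), 0 < (M.submatrix (fun i : S => (i : Fin n)) (fun j : S => (j : Fin n))).det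


lemma finStrongInd {n : ℕ} {P : Fin n → Prop} (h : ∀ i : Fin n, (∀ j : Fin n, j < i → P j) → P i) :
    ∀ i, P i := by
  have key : ∀ m : ℕ, ∀ i : Fin n, i.val < m → P i := by
    intro m
    induction m with
    | zero => intro i hi; omega
    | succ m ih =>
      intro i hi
      exact h i fun j hj => ih j (by have : j.val < i.val := hj; omega)
  exact fun i => key (i.val + 1) i (Nat.lt_succ_self _)

section Base
variable {n : ℕ} (A : Matrix (Fin n) (Fin n) ℝ)

lemma nekH_eq (i : Fin n) :
    nekH A i = (∑ j : Fin n, if j < i then |A i j| / |A j j| * nekH A j else 0)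
      + ∑ j : Fin n, if i < j then |A i j| else 0 := by
  rw [nekH]; simp [Real.norm_eq_abs]

lemma nekZ_eq (i : Fin n) :
    nekZ A i = (∑ j : Fin n, if j < i then |A i j| / |A j j| * nekZ A j else 0) + 1 := by
  rw [nekZ]; simp [Real.norm_eq_abs]

lemma nekEta_eq (i : Fin n) :
    nekEta A i = (∑ j : Fin n, if j < i then |A i j| / min |A j j| 1 * nekEta A j else 0) + 1 := by
  rw [nekEta]; simp [Real.norm_eq_abs]

lemma nekH_nonneg (i : Fin n) : 0 ≤ nekH A i := by
  induction i using finStrongInd with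
  | h i ih =>
    rw [nekH_eq]
    refine add_nonneg (Finset.sum_nonneg fun j _ => ?_) (Finset.sum_nonneg fun j _ => ?_)
    · split
      · exact mul_nonneg (div_nonneg (abs_nonneg _) (abs_nonneg _)) (ih j ‹_›)
      · exact le_refl 0
    · split
      · exact abs_nonneg _
      · exact le_refl 0

lemma one_le_nekZ (i : Fin n) : 1 ≤ nekZ A i := by
  induction i using finStrongInd with
  | h i ih =>
    rw [nekZ_eq]
    have : 0 ≤ ∑ j : Fin n, if j < i then |A i j| / |A j j| * nekZ A j else 0 := by
      refine Finset.sum_nonneg fun j _ => ?_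
      split
      · exact mul_nonneg (div_nonneg (abs_nonneg _) (abs_nonneg _))
          (le_trans zero_le_one (ih j ‹_›))
      · exact le_refl 0
    linarith

lemma one_le_nekEta (i : Fin n) : 1 ≤ nekEta A i := by
  induction i using finStrongInd with
  | h i ih =>
    rw [nekEta_eq]
    have : 0 ≤ ∑ j : Fin n, if j < i then |A i j| / min |A j j| 1 * nekEta A j else 0 := by
      refine Finset.sum_nonneg fun j _ => ?_
      split
      · refine mul_nonneg (div_nonneg (abs_nonneg _) ?_) (le_trans zero_le_one (ih j ‹_›))
        exact le_min (abs_nonneg _) zero_le_one |>.trans (le_refl _) -- min nonneg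
      · exact le_refl 0
    linarith

end Base

lemma convex_min_sub (a b c d : ℝ) :
    ∃ t : ℝ, 0 ≤ t ∧ t ≤ 1 ∧ min a b - min c d = (1 - t) * (a - c) + t * (b - d) := by
  set p := a - c
  set q := b - d
  have hub : min a b - min c d ≤ max p q := by
    rcases le_total c d with h | h
    · rw [min_eq_left h]
      calc min a b - c ≤ a - c := by have := min_le_left a b; linarith
        _ ≤ max p q := le_max_left _ _
    · rw [min_eq_right h]
      calc min a b - d ≤ b - d := by have := min_le_right a b; linarith
        _ ≤ max p q := le_max_right _ _
  have hlb : min p q ≤ min a b - min c d := by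
    rcases le_total a b with h | h
    · rw [min_eq_left h]
      calc min p q ≤ p := min_le_left _ _
        _ ≤ a - min c d := by have := min_le_left c d; simp only [p]; linarith
    · rw [min_eq_right h]
      calc min p q ≤ q := min_le_right _ _
        _ ≤ b - min c d := by have := min_le_right c d; simp only [q]; linarith
  set m := min a b - min c d
  rcases eq_or_ne p q with hpq | hpq
  · refine ⟨0, le_refl _, zero_le_one, ?_⟩
    have h1 : min p q = p := by rw [hpq, min_self]
    have h2 : max p q = p := by rw [hpq, max_self]
    have : m = p := le_antisymm (h2 ▸ hub) (h1 ▸ hlb)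
    rw [this]; ring
  · refine ⟨(m - p) / (q - p), ?_, ?_, ?_⟩
    · rcases lt_or_gt_of_ne hpq with h | h
      · apply div_nonneg
        · rw [min_eq_left h.le] at hlb; linarith
        · linarith
      · have h1 : m - p ≤ 0 := by rw [max_eq_left h.le] at hub; linarith
        have h2 : q - p < 0 := by linarith
        exact div_nonneg_iff.mpr (Or.inr ⟨h1, h2.le⟩)
    · rcases lt_or_gt_of_ne hpq with h | h
      · rw [div_le_one (by linarith)]
        rw [max_eq_right h.le] at hub; linarith
      · have h2 : q - p < 0 := by linarith
        rw [div_le_one_of_neg h2]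
        rw [min_eq_right h.le] at hlb; linarith
    · have hqp : q - p ≠ 0 := sub_ne_zero.mpr (Ne.symm hpq)
      field_simp
      ring
section Scaling
variable {n : ℕ}

lemma nekrasov_scaling (hn : 0 < n) (A : Matrix (Fin n) (Fin n) ℝ)
    (hpos : ∀ i, 0 < A i i) (hNek : ∀ i, nekH A i < A i i) :
    ∃ (w : Fin n → ℝ) (β : ℝ) (i0 : Fin n),
      0 < β ∧ β = (A i0 i0 - nekH A i0) / nekZ A i0 ∧
      (∀ i, 0 < w i) ∧ (∀ i, w i ≤ 1) ∧
      (∀ i, (∑ j ∈ Finset.univ.erase i, |A i j| * w j) + β ≤ A i i * w i) := by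
  have hne : (Finset.univ : Finset (Fin n)).Nonempty := ⟨⟨0, hn⟩, Finset.mem_univ _⟩
  have hZpos : ∀ i, 0 < nekZ A i := fun i => zero_lt_one.trans_le (one_le_nekZ A i)
  obtain ⟨i0, _, hi0⟩ := Finset.exists_mem_eq_inf' hne (fun i => (A i i - nekH A i) / nekZ A i)
  set β := Finset.univ.inf' hne (fun i => (A i i - nekH A i) / nekZ A i) with hβdef
  have hβpos : 0 < β := by
    rw [hβdef, Finset.lt_inf'_iff]
    exact fun i _ => div_pos (sub_pos.mpr (hNek i)) (hZpos i)
  have hβle : ∀ i, β * nekZ A i ≤ A i i - nekH A i := by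
    intro i
    have h1 : β ≤ (A i i - nekH A i) / nekZ A i :=
      Finset.inf'_le _ (Finset.mem_univ i)
    exact (le_div_iff₀ (hZpos i)).mp h1
  refine ⟨fun i => (nekH A i + β * nekZ A i) / A i i, β, i0, hβpos, hi0, ?_, ?_, ?_⟩
  · intro i
    exact div_pos (by nlinarith [nekH_nonneg A i, hZpos i]) (hpos i)
  · intro i
    rw [div_le_one (hpos i)]
    have := hβle i; linarith
  · intro i
    have hAne : ∀ j : Fin n, A j j ≠ 0 := fun j => (hpos j).ne'
    -- split the erase sum
    have hsplit : (∑ j ∈ Finset.univ.erase i, |A i j| * ((nekH A j + β * nekZ A j) / A j j))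
        = (∑ j : Fin n, if j < i then |A i j| * ((nekH A j + β * nekZ A j) / A j j) else 0)
        + (∑ j : Fin n, if i < j then |A i j| * ((nekH A j + β * nekZ A j) / A j j) else 0) := by
      rw [← Finset.sum_add_distrib]
      rw [← Finset.sum_erase (Finset.univ)
        (a := i) (by simp [lt_irrefl])]
      refine Finset.sum_congr rfl fun j hj => ?_
      have hji : j ≠ i := (Finset.mem_erase.mp hj).1
      rcases hji.lt_or_gt with h | h
      · rw [if_pos h, if_neg (asymm h), add_zero]
      · rw [if_neg (asymm h), if_pos h, zero_add]
    have hT1 : (∑ j : Fin n, if j < i then |A i j| * ((nekH A j + β * nekZ A j) / A j j) else 0)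
        = (∑ j : Fin n, if j < i then |A i j| / |A j j| * nekH A j else 0)
        + β * (∑ j : Fin n, if j < i then |A i j| / |A j j| * nekZ A j else 0) := by
      rw [Finset.mul_sum, ← Finset.sum_add_distrib]
      refine Finset.sum_congr rfl fun j _ => ?_
      split
      · rw [abs_of_pos (hpos j)]
        field_simp
      · simp
    have hT2 : (∑ j : Fin n, if i < j then |A i j| * ((nekH A j + β * nekZ A j) / A j j) else 0)
        ≤ (∑ j : Fin n, if i < j then |A i j| else 0) := by
      refine Finset.sum_le_sum fun j _ => ?_
      split
      · have hw1 : (nekH A j + β * nekZ A j) / A j j ≤ 1 := by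
          rw [div_le_one (hpos j)]
          have := hβle j; linarith
        have hw0 : 0 ≤ (nekH A j + β * nekZ A j) / A j j :=
          div_nonneg (by nlinarith [nekH_nonneg A j, hZpos j]) (hpos j).le
        nlinarith [abs_nonneg (A i j)]
      · exact le_refl 0
    have hHi := nekH_eq A i
    have hZi := nekZ_eq A i
    have hwi : A i i * ((nekH A i + β * nekZ A i) / A i i) = nekH A i + β * nekZ A i := by
      field_simp
      exact mul_div_cancel_left₀ _ (hAne i)
    have hz2 : β * (∑ j : Fin n, if j < i then |A i j| / |A j j| * nekZ A j else 0)
        = β * nekZ A i - β := by rw [hZi]; ring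
    rw [hsplit, hT1, hwi]
    linarith
end Scaling

section SDD
variable {n : ℕ}

lemma sdd_bound (hn : 0 < n) (A : Matrix (Fin n) (Fin n) ℝ) (w : Fin n → ℝ) (β : ℝ)
    (hβ : 0 < β) (hw0 : ∀ i, 0 < w i) (hw1 : ∀ i, w i ≤ 1)
    (hdom : ∀ i, (∑ j ∈ Finset.univ.erase i, |A i j| * w j) + β ≤ A i i * w i)
    (y : Fin n → ℝ) (k : Fin n) : |y k| ≤ (1 / β) * ‖A.mulVec y‖ := by
  have hne : (Finset.univ : Finset (Fin n)).Nonempty := ⟨⟨0, hn⟩, Finset.mem_univ _⟩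
  obtain ⟨i, _, hi⟩ := Finset.exists_mem_eq_sup' hne (fun j => |y j| / w j)
  set s := Finset.univ.sup' hne (fun j => |y j| / w j) with hsdef
  have hsle : ∀ j, |y j| ≤ s * w j := by
    intro j
    have h1 : |y j| / w j ≤ s := Finset.le_sup' (fun j => |y j| / w j) (Finset.mem_univ j)
    calc |y j| = |y j| / w j * w j := (div_mul_cancel₀ _ (hw0 j).ne').symm
      _ ≤ s * w j := mul_le_mul_of_nonneg_right h1 (hw0 j).le
  have hs0 : 0 ≤ s := le_trans (div_nonneg (abs_nonneg _) (hw0 i).le) hi.ge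
  have hyi : |y i| = s * w i := by
    rw [hi]; exact (div_mul_cancel₀ _ (hw0 i).ne').symm
  have hApos : 0 < A i i := by
    have h1 := hdom i
    have h2 : 0 ≤ ∑ j ∈ Finset.univ.erase i, |A i j| * w j :=
      Finset.sum_nonneg fun j _ => mul_nonneg (abs_nonneg _) (hw0 j).le
    by_contra h
    push_neg at h
    nlinarith [hw0 i]
  have hrow : (A.mulVec y) i = A i i * y i + ∑ j ∈ Finset.univ.erase i, A i j * y j := by
    simp only [Matrix.mulVec, dotProduct]
    rw [← Finset.add_sum_erase _ _ (Finset.mem_univ i)]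
  have habs : |(A.mulVec y) i| ≤ ‖A.mulVec y‖ := by
    rw [← Real.norm_eq_abs]; exact norm_le_pi_norm _ i
  have hsum : ∑ j ∈ Finset.univ.erase i, |A i j * y j| ≤ s * (A i i * w i - β) := by
    calc ∑ j ∈ Finset.univ.erase i, |A i j * y j|
        = ∑ j ∈ Finset.univ.erase i, |A i j| * |y j| := by
          refine Finset.sum_congr rfl fun j _ => abs_mul _ _
      _ ≤ ∑ j ∈ Finset.univ.erase i, |A i j| * (s * w j) :=
          Finset.sum_le_sum fun j _ => mul_le_mul_of_nonneg_left (hsle j) (abs_nonneg _)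
      _ = s * ∑ j ∈ Finset.univ.erase i, |A i j| * w j := by
          rw [Finset.mul_sum]; refine Finset.sum_congr rfl fun j _ => by ring
      _ ≤ s * (A i i * w i - β) := by
          refine mul_le_mul_of_nonneg_left ?_ hs0
          have := hdom i; linarith
  have hkey : s * β ≤ ‖A.mulVec y‖ := by
    have h1 : A i i * |y i| ≤ ‖A.mulVec y‖ + s * (A i i * w i - β) := by
      calc A i i * |y i| = |A i i * y i| := by
            rw [abs_mul, abs_of_pos hApos]
        _ = |(A.mulVec y) i - ∑ j ∈ Finset.univ.erase i, A i j * y j| := by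
            rw [hrow]; ring_nf
        _ ≤ |(A.mulVec y) i| + |∑ j ∈ Finset.univ.erase i, A i j * y j| := abs_sub _ _
        _ ≤ ‖A.mulVec y‖ + ∑ j ∈ Finset.univ.erase i, |A i j * y j| := by
            gcongr
            exact Finset.abs_sum_le_sum_abs _ _
        _ ≤ ‖A.mulVec y‖ + s * (A i i * w i - β) := by linarith
    rw [hyi] at h1
    nlinarith
  calc |y k| ≤ s * w k := hsle k
    _ ≤ s * 1 := mul_le_mul_of_nonneg_left (hw1 k) hs0
    _ = s := mul_one s
    _ ≤ (1 / β) * ‖A.mulVec y‖ := by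
        rw [div_mul_eq_mul_div, le_div_iff₀ hβ]
        linarith

lemma sdd_nonneg (hn : 0 < n) (A : Matrix (Fin n) (Fin n) ℝ) (w : Fin n → ℝ) (β : ℝ)
    (hβ : 0 < β) (hw0 : ∀ i, 0 < w i)
    (hdom : ∀ i, (∑ j ∈ Finset.univ.erase i, |A i j| * w j) + β ≤ A i i * w i)
    (hoff : ∀ i j, i ≠ j → A i j ≤ 0)
    (u : Fin n → ℝ) (hu : ∀ i, 0 ≤ (A.mulVec u) i) : ∀ i, 0 ≤ u i := by
  have hne : (Finset.univ : Finset (Fin n)).Nonempty := ⟨⟨0, hn⟩, Finset.mem_univ _⟩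
  obtain ⟨i, _, hi⟩ := Finset.exists_mem_eq_inf' hne (fun j => u j / w j)
  set s := Finset.univ.inf' hne (fun j => u j / w j) with hsdef
  have hsle : ∀ j, s * w j ≤ u j := by
    intro j
    have h1 : s ≤ u j / w j := Finset.inf'_le _ (Finset.mem_univ j)
    calc s * w j ≤ u j / w j * w j := mul_le_mul_of_nonneg_right h1 (hw0 j).le
      _ = u j := div_mul_cancel₀ _ (hw0 j).ne'
  by_contra hcon
  push_neg at hcon
  obtain ⟨k, hk⟩ := hcon
  have hs0 : s < 0 := by
    have h1 : u k / w k < 0 := div_neg_of_neg_of_pos hk (hw0 k)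
    have h2 : s ≤ u k / w k := Finset.inf'_le _ (Finset.mem_univ k)
    linarith
  have hui : u i = s * w i := by
    rw [hi]; exact (div_mul_cancel₀ _ (hw0 i).ne').symm
  have hrow : (A.mulVec u) i = A i i * u i + ∑ j ∈ Finset.univ.erase i, A i j * u j := by
    simp only [Matrix.mulVec, dotProduct]
    rw [← Finset.add_sum_erase _ _ (Finset.mem_univ i)]
  have hsum : ∑ j ∈ Finset.univ.erase i, A i j * u j
      ≤ s * ∑ j ∈ Finset.univ.erase i, A i j * w j := by
    rw [Finset.mul_sum]
    refine Finset.sum_le_sum fun j hj => ?_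
    have hij : A i j ≤ 0 := hoff i j (Ne.symm (Finset.mem_erase.mp hj).1)
    have := hsle j
    nlinarith
  have heq : ∑ j ∈ Finset.univ.erase i, A i j * w j
      = - ∑ j ∈ Finset.univ.erase i, |A i j| * w j := by
    rw [← Finset.sum_neg_distrib]
    refine Finset.sum_congr rfl fun j hj => ?_
    have hij : A i j ≤ 0 := hoff i j (Ne.symm (Finset.mem_erase.mp hj).1)
    rw [abs_of_nonpos hij]; ring
  have h1 := hu i
  rw [hrow, hui] at h1
  have h2 := hdom i
  nlinarith [hsle i]
end SDD
noncomputable def BDmat {n : ℕ} (B : Matrix (Fin n) (Fin n) ℝ) (d : Fin n → ℝ) :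
    Matrix (Fin n) (Fin n) ℝ :=
  Matrix.of fun i j => if i = j then 1 - d i + d i * B i i else d i * B i j

section BD
variable {n : ℕ} (B : Matrix (Fin n) (Fin n) ℝ) (d : Fin n → ℝ)

lemma BD_diag (i : Fin n) : BDmat B d i i = 1 - d i + d i * B i i := by
  simp [BDmat]

lemma BD_off {i j : Fin n} (h : i ≠ j) : BDmat B d i j = d i * B i j := by
  simp [BDmat, h]

variable (hd : ∀ i, 0 ≤ d i ∧ d i ≤ 1) (hpos : ∀ i, 0 < B i i)

include hd hpos in
lemma BD_diag_ge (i : Fin n) : min (B i i) 1 ≤ BDmat B d i i := by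
  rw [BD_diag]
  nlinarith [min_le_left (B i i) 1, min_le_right (B i i) 1, (hd i).1, (hd i).2, hpos i]

include hd hpos in
lemma BD_diag_pos (i : Fin n) : 0 < BDmat B d i i :=
  lt_of_lt_of_le (lt_min (hpos i) zero_lt_one) (BD_diag_ge B d hd hpos i)

include hd hpos in
lemma BD_claim1 : ∀ i, nekH (BDmat B d) i ≤ d i * nekH B i := by
  apply finStrongInd
  intro i ih
  rw [nekH_eq, nekH_eq B i]
  have key : ∀ j : Fin n, j < i →
      |BDmat B d i j| / |BDmat B d j j| * nekH (BDmat B d) j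
        ≤ d i * (|B i j| / |B j j| * nekH B j) := by
    intro j hj
    have hij : i ≠ j := (ne_of_lt hj).symm
    have hδ : 0 < BDmat B d j j := BD_diag_pos B d hd hpos j
    have h1 : nekH (BDmat B d) j / BDmat B d j j ≤ nekH B j / B j j := by
      rw [div_le_div_iff₀ hδ (hpos j), BD_diag]
      have h2 := ih j hj
      nlinarith [nekH_nonneg B j, (hd j).1, (hd j).2, hpos j, nekH_nonneg (BDmat B d) j]
    calc |BDmat B d i j| / |BDmat B d j j| * nekH (BDmat B d) j
        = |BDmat B d i j| * (nekH (BDmat B d) j / BDmat B d j j) := by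
          rw [abs_of_pos hδ]; ring
      _ ≤ |BDmat B d i j| * (nekH B j / B j j) :=
          mul_le_mul_of_nonneg_left h1 (abs_nonneg _)
      _ = d i * (|B i j| / |B j j| * nekH B j) := by
          rw [BD_off B d hij, abs_mul, abs_of_nonneg (hd i).1, abs_of_pos (hpos j)]
          ring
  have hsum1 : (∑ j : Fin n, if j < i then |BDmat B d i j| / |BDmat B d j j| * nekH (BDmat B d) j else 0)
      ≤ ∑ j : Fin n, if j < i then d i * (|B i j| / |B j j| * nekH B j) else 0 := by
    refine Finset.sum_le_sum fun j _ => ?_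
    split
    · exact key j ‹_›
    · exact le_refl 0
  have hsum2 : (∑ j : Fin n, if i < j then |BDmat B d i j| else 0)
      = ∑ j : Fin n, if i < j then d i * |B i j| else 0 := by
    refine Finset.sum_congr rfl fun j _ => ?_
    split
    · have hij : i ≠ j := ne_of_lt ‹_›
      rw [BD_off B d hij, abs_mul, abs_of_nonneg (hd i).1]
    · rfl
  rw [mul_add]
  have e1 : (∑ j : Fin n, if j < i then d i * (|B i j| / |B j j| * nekH B j) else 0)
      = d i * ∑ j : Fin n, if j < i then |B i j| / |B j j| * nekH B j else 0 := by
    rw [Finset.mul_sum]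
    exact Finset.sum_congr rfl fun j _ => by split <;> simp
  have e2 : (∑ j : Fin n, if i < j then d i * |B i j| else 0)
      = d i * ∑ j : Fin n, if i < j then |B i j| else 0 := by
    rw [Finset.mul_sum]
    exact Finset.sum_congr rfl fun j _ => by split <;> simp
  rw [e1] at hsum1
  rw [e2] at hsum2
  linarith

include hd hpos in
lemma BD_claim2 : ∀ i, nekZ (BDmat B d) i ≤ nekEta B i := by
  apply finStrongInd
  intro i ih
  rw [nekZ_eq, nekEta_eq]
  have key : ∀ j : Fin n, j < i →
      |BDmat B d i j| / |BDmat B d j j| * nekZ (BDmat B d) j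
        ≤ |B i j| / min |B j j| 1 * nekEta B j := by
    intro j hj
    have hij : i ≠ j := (ne_of_lt hj).symm
    have hδ : 0 < BDmat B d j j := BD_diag_pos B d hd hpos j
    have hmin : 0 < min (B j j) 1 := lt_min (hpos j) zero_lt_one
    have h1 : nekZ (BDmat B d) j / BDmat B d j j ≤ nekEta B j / min (B j j) 1 := by
      apply div_le_div₀ (zero_le_one.trans (one_le_nekEta B j)) (ih j hj) hmin
      exact BD_diag_ge B d hd hpos j
    calc |BDmat B d i j| / |BDmat B d j j| * nekZ (BDmat B d) j
        = |BDmat B d i j| * (nekZ (BDmat B d) j / BDmat B d j j) := by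
          rw [abs_of_pos hδ]; ring
      _ ≤ |BDmat B d i j| * (nekEta B j / min (B j j) 1) :=
          mul_le_mul_of_nonneg_left h1 (abs_nonneg _)
      _ ≤ |B i j| * (nekEta B j / min (B j j) 1) := by
          refine mul_le_mul_of_nonneg_right ?_
            (div_nonneg (zero_le_one.trans (one_le_nekEta B j)) hmin.le)
          rw [BD_off B d hij, abs_mul, abs_of_nonneg (hd i).1]
          nlinarith [abs_nonneg (B i j), (hd i).2]
      _ = |B i j| / min |B j j| 1 * nekEta B j := by
          rw [abs_of_pos (hpos j)]; ring
  have hsum1 : (∑ j : Fin n, if j < i then |BDmat B d i j| / |BDmat B d j j| * nekZ (BDmat B d) j else 0)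
      ≤ ∑ j : Fin n, if j < i then |B i j| / min |B j j| 1 * nekEta B j else 0 := by
    refine Finset.sum_le_sum fun j _ => ?_
    split
    · exact key j ‹_›
    · exact le_refl 0
  linarith

include hd hpos in
lemma BD_gap (i : Fin n) :
    min (B i i - nekH B i) 1 ≤ BDmat B d i i - nekH (BDmat B d) i := by
  have h1 := BD_claim1 B d hd hpos i
  rw [BD_diag]
  nlinarith [min_le_left (B i i - nekH B i) 1, min_le_right (B i i - nekH B i) 1,
    (hd i).1, (hd i).2, nekH_nonneg B i]

end BD
section BP
variable {n : ℕ} (M : Matrix (Fin n) (Fin n) ℝ)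

lemma rPlus_nonneg (i : Fin n) : 0 ≤ rPlus M i :=
  (Finset.le_fold_max _).mpr (Or.inl le_rfl)

lemma le_rPlus {i j : Fin n} (h : j ≠ i) : M i j ≤ rPlus M i :=
  (Finset.le_fold_max _).mpr (Or.inr ⟨j, Finset.mem_erase.mpr ⟨h, Finset.mem_univ j⟩, le_rfl⟩)

lemma BPlus_apply (i j : Fin n) : BPlus M i j = M i j - rPlus M i := rfl

lemma BPlus_off {i j : Fin n} (h : i ≠ j) : BPlus M i j ≤ 0 :=
  sub_nonpos.mpr (le_rPlus M h.symm)

end BP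

lemma core_lemma {n : ℕ} (hn : 2 ≤ n) (M : Matrix (Fin n) (Fin n) ℝ) (hBN : IsBNekrasov M)
    (d : Fin n → ℝ) (hd : ∀ i, 0 ≤ d i ∧ d i ≤ 1) (y c : Fin n → ℝ)
    (hc : ∀ i, c i = (1 - d i) * y i + d i * (M.mulVec y) i) (k : Fin n) :
    |y k| ≤ (Finset.univ.sup' ⟨⟨0, Nat.lt_of_lt_of_le Nat.two_pos hn⟩, Finset.mem_univ _⟩
        (fun i => (n - 1 : ℝ) * nekEta (BPlus M) i /
          min (BPlus M i i - nekH (BPlus M) i) 1)) * ‖c‖ := by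
  have hn0 : 0 < n := by omega
  obtain ⟨hNekB, hposB⟩ := hBN
  have hNek' : ∀ i, nekH (BPlus M) i < BPlus M i i := by
    intro i
    have := hNekB i
    rwa [Real.norm_eq_abs, abs_of_pos (hposB i)] at this
  set B := BPlus M with hBdef
  set BD := BDmat B d with hBDdef
  have hBDpos : ∀ i, 0 < BD i i := fun i => BD_diag_pos B d hd hposB i
  have hgap : ∀ i, min (B i i - nekH B i) 1 ≤ BD i i - nekH BD i :=
    fun i => BD_gap B d hd hposB i
  have hgpos : ∀ i, 0 < min (B i i - nekH B i) 1 :=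
    fun i => lt_min (sub_pos.mpr (hNek' i)) zero_lt_one
  have hBDNek : ∀ i, nekH BD i < BD i i := by
    intro i; have h1 := hgap i; have h2 := hgpos i; linarith
  obtain ⟨w, β, i0, hβpos, hβval, hw0, hw1, hdom⟩ := nekrasov_scaling hn0 BD hBDpos hBDNek
  -- solve BD u = t
  set t := fun i => d i * rPlus M i with htdef
  have ht0 : ∀ i, 0 ≤ t i := fun i => mul_nonneg (hd i).1 (rPlus_nonneg M i)
  have hinj : Function.Injective BD.mulVecLin := by
    rw [injective_iff_map_eq_zero]
    intro z hz
    funext j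
    have h1 := sdd_bound hn0 BD w β hβpos hw0 hw1 hdom z j
    have h2 : BD.mulVec z = 0 := hz
    rw [h2, norm_zero, mul_zero] at h1
    simp only [Pi.zero_apply]
    exact abs_eq_zero.mp (le_antisymm h1 (abs_nonneg _))
  obtain ⟨u, hu⟩ := (LinearMap.injective_iff_surjective).mp hinj t
  have hu' : BD.mulVec u = t := hu
  have hu0 : ∀ i, 0 ≤ u i := by
    refine sdd_nonneg hn0 BD w β hβpos hw0 hdom ?_ u ?_
    · intro i j hij
      rw [hBDdef, BD_off B d hij]
      exact mul_nonpos_of_nonneg_of_nonpos (hd i).1 (BPlus_off M hij)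
    · intro i; rw [hu']; exact ht0 i
  set σ := ∑ j, y j with hσdef
  set s := ∑ j, u j with hsdef
  have hs0 : 0 ≤ s := Finset.sum_nonneg fun j _ => hu0 j
  have h1s : 0 < 1 + s := by linarith
  -- key algebraic identities
  have hMy : ∀ i, (M.mulVec y) i = (∑ j, B i j * y j) + rPlus M i * σ := by
    intro i
    simp only [Matrix.mulVec, dotProduct]
    rw [hσdef, Finset.mul_sum, ← Finset.sum_add_distrib]
    refine Finset.sum_congr rfl fun j _ => ?_
    rw [hBdef, BPlus_apply]
    ring
  have hBDy : ∀ v : Fin n → ℝ, ∀ i, (BD.mulVec v) i = (1 - d i) * v i + d i * ∑ j, B i j * v j := by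
    intro v i
    simp only [Matrix.mulVec, dotProduct]
    have : ∀ j : Fin n, BD i j * v j
        = (if i = j then (1 - d i) * v j else 0) + d i * (B i j * v j) := by
      intro j
      rw [hBDdef]
      by_cases h : i = j
      · subst h; rw [BD_diag, if_pos rfl]; ring
      · rw [BD_off B d h, if_neg h]; ring
    rw [Finset.sum_congr rfl fun j _ => this j, Finset.sum_add_distrib,
      Finset.sum_ite_eq Finset.univ i (fun j => (1 - d i) * v j), if_pos (Finset.mem_univ i),
      ← Finset.mul_sum]
  have hBDyc : ∀ i, (BD.mulVec y) i = c i - t i * σ := by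
    intro i
    rw [hBDy y i]
    rw [hc i, hMy i, htdef]
    ring
  set W := y + σ • u with hWdef
  have hWc : BD.mulVec W = c := by
    funext i
    rw [hWdef, Matrix.mulVec_add, Matrix.mulVec_smul]
    simp only [Pi.add_apply, Pi.smul_apply, smul_eq_mul]
    rw [hBDyc i, hu']
    ring
  have hWb : ∀ j, |W j| ≤ 1 / β * ‖c‖ := by
    intro j
    have h1 := sdd_bound hn0 BD w β hβpos hw0 hw1 hdom W j
    rwa [hWc] at h1
  have hQ0 : 0 ≤ 1 / β * ‖c‖ := mul_nonneg (by positivity) (norm_nonneg c)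
  -- recover y from W
  have hsumW : ∑ j, W j = σ * (1 + s) := by
    rw [hWdef]
    simp only [Pi.add_apply, Pi.smul_apply, smul_eq_mul]
    rw [Finset.sum_add_distrib, ← Finset.mul_sum, ← hσdef, ← hsdef]
    ring
  have hyk : y k = (1 - u k / (1 + s)) * W k - u k / (1 + s) * ∑ j ∈ Finset.univ.erase k, W j := by
    have hW' : ∑ j ∈ Finset.univ.erase k, W j = σ * (1 + s) - W k := by
      rw [← hsumW, Finset.sum_erase_eq_sub (Finset.mem_univ k)]
    rw [hW']
    have hWk : W k = y k + σ * u k := by rw [hWdef]; simp [smul_eq_mul]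
    field_simp
    rw [hWk]
    ring
  have ha0 : 0 ≤ u k / (1 + s) := div_nonneg (hu0 k) h1s.le
  have ha1 : u k / (1 + s) ≤ 1 := by
    rw [div_le_one h1s]
    have : u k ≤ s := Finset.single_le_sum (fun j _ => hu0 j) (Finset.mem_univ k)
    linarith
  have hsumabs : ∑ j ∈ Finset.univ.erase k, |W j| ≤ ((n : ℝ) - 1) * (1 / β * ‖c‖) := by
    calc ∑ j ∈ Finset.univ.erase k, |W j|
        ≤ ∑ j ∈ Finset.univ.erase k, 1 / β * ‖c‖ :=
          Finset.sum_le_sum fun j _ => hWb j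
      _ = ((Finset.univ.erase k).card : ℝ) * (1 / β * ‖c‖) := by
          rw [Finset.sum_const, nsmul_eq_mul]
      _ = ((n : ℝ) - 1) * (1 / β * ‖c‖) := by
          rw [Finset.card_erase_of_mem (Finset.mem_univ k), Finset.card_univ, Fintype.card_fin]
          have : ((n - 1 : ℕ) : ℝ) = (n : ℝ) - 1 := by
            have : (1 : ℕ) ≤ n := by omega
            push_cast [Nat.cast_sub this]
            ring
          rw [this]
  have hyb : |y k| ≤ ((n : ℝ) - 1) * (1 / β * ‖c‖) := by
    set a := u k / (1 + s)
    set Q := 1 / β * ‖c‖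
    have hn2 : (2 : ℝ) ≤ (n : ℝ) := by exact_mod_cast hn
    calc |y k| = |(1 - a) * W k - a * ∑ j ∈ Finset.univ.erase k, W j| := by rw [hyk]
      _ ≤ |(1 - a) * W k| + |a * ∑ j ∈ Finset.univ.erase k, W j| := abs_sub _ _
      _ = (1 - a) * |W k| + a * |∑ j ∈ Finset.univ.erase k, W j| := by
          rw [abs_mul, abs_mul, abs_of_nonneg (by linarith : (0:ℝ) ≤ 1 - a), abs_of_nonneg ha0]
      _ ≤ (1 - a) * Q + a * (((n : ℝ) - 1) * Q) := by
          have h1 : |∑ j ∈ Finset.univ.erase k, W j| ≤ ((n : ℝ) - 1) * Q :=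
            le_trans (Finset.abs_sum_le_sum_abs _ _) hsumabs
          have h2 := hWb k
          gcongr <;> linarith
      _ ≤ ((n : ℝ) - 1) * Q := by
          nlinarith [mul_nonneg (mul_nonneg (by linarith : (0:ℝ) ≤ 1 - a)
            (by linarith : (0:ℝ) ≤ (n:ℝ) - 2)) hQ0]
  -- final constant comparison
  refine le_trans hyb ?_
  have hZη : nekZ BD i0 ≤ nekEta B i0 := BD_claim2 B d hd hposB i0
  have hZpos : 0 < nekZ BD i0 := zero_lt_one.trans_le (one_le_nekZ BD i0)
  have hβinv : 1 / β = nekZ BD i0 / (BD i0 i0 - nekH BD i0) := by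
    rw [hβval, one_div_div]
  have hfrac : nekZ BD i0 / (BD i0 i0 - nekH BD i0)
      ≤ nekEta B i0 / min (B i0 i0 - nekH B i0) 1 := by
    apply div_le_div₀ (zero_le_one.trans (one_le_nekEta B i0)) hZη (hgpos i0) (hgap i0)
  have hsup : ((n : ℝ) - 1) * (nekEta B i0 / min (B i0 i0 - nekH B i0) 1)
      ≤ Finset.univ.sup' ⟨⟨0, by omega⟩, Finset.mem_univ _⟩
        (fun i => (n - 1 : ℝ) * nekEta B i / min (B i i - nekH B i) 1) := by
    have := Finset.le_sup' (f := fun i => (n - 1 : ℝ) * nekEta B i / min (B i i - nekH B i) 1)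
      (Finset.mem_univ i0)
    rw [← mul_div_assoc]
    exact this
  have hn1 : (0 : ℝ) ≤ (n : ℝ) - 1 := by
    have : (2 : ℝ) ≤ (n : ℝ) := by exact_mod_cast hn
    linarith
  calc ((n : ℝ) - 1) * (1 / β * ‖c‖) = ((n : ℝ) - 1) * (1 / β) * ‖c‖ := by ring
    _ ≤ ((n : ℝ) - 1) * (nekEta B i0 / min (B i0 i0 - nekH B i0) 1) * ‖c‖ := by
        refine mul_le_mul_of_nonneg_right ?_ (norm_nonneg c)
        refine mul_le_mul_of_nonneg_left ?_ hn1
        rw [hβinv]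
        exact hfrac
    _ ≤ _ := mul_le_mul_of_nonneg_right hsup (norm_nonneg c)
theorem stmt18 {n : ℕ} (hn : 2 ≤ n) (M : Matrix (Fin n) (Fin n) ℝ)
    (hBN : IsBNekrasov M)
    (q xstar : Fin n → ℝ) (hsol : IsLCPSolution M q xstar) (x : Fin n → ℝ) :
    ‖x - xstar‖ ≤
      (Finset.univ.sup' ⟨⟨0, by omega⟩, Finset.mem_univ _⟩
        (fun i => (n - 1 : ℝ) * nekEta (BPlus M) i /
          min (BPlus M i i - nekH (BPlus M) i) 1)) *
      ‖fun i => min (x i) ((M.mulVec x + q) i)‖ := by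
  have h0 : ∀ i, min (xstar i) ((M.mulVec xstar + q) i) = 0 := by
    obtain ⟨h1, h2, h3⟩ := hsol
    intro i
    have hterm : ∀ j ∈ Finset.univ, 0 ≤ (M.mulVec xstar + q) j * xstar j :=
      fun j _ => mul_nonneg (h2 j) (h1 j)
    have hz := (Finset.sum_eq_zero_iff_of_nonneg hterm).mp h3 i (Finset.mem_univ i)
    rcases mul_eq_zero.mp hz with h | h
    · rw [min_eq_right (h ▸ h1 i), h]
    · rw [min_eq_left (h ▸ h2 i), h]
  set y := x - xstar with hydef
  set c := fun i => min (x i) ((M.mulVec x + q) i) with hcdef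
  have hy : ∀ i, y i = x i - xstar i := fun i => rfl
  have hMy : ∀ i, (M.mulVec y) i = (M.mulVec x + q) i - (M.mulVec xstar + q) i := by
    intro i
    rw [hydef, Matrix.mulVec_sub]
    simp only [Pi.sub_apply, Pi.add_apply]
    ring
  choose d hd0 hd1 hrel using fun i =>
    convex_min_sub (x i) ((M.mulVec x + q) i) (xstar i) ((M.mulVec xstar + q) i)
  have hc : ∀ i, c i = (1 - d i) * y i + d i * (M.mulVec y) i := by
    intro i
    have h1 := hrel i
    rw [h0 i, sub_zero] at h1
    rw [hcdef]
    simp only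
    rw [h1, hy i, hMy i]
  have key := core_lemma hn M hBN d (fun i => ⟨hd0 i, hd1 i⟩) y c hc
  have hpos' : ∀ i, 0 < min (BPlus M i i - nekH (BPlus M) i) 1 := by
    intro i
    refine lt_min (sub_pos.mpr ?_) zero_lt_one
    have := hBN.1 i
    rwa [Real.norm_eq_abs, abs_of_pos (hBN.2 i)] at this
  have hK0 : (0 : ℝ) ≤ Finset.univ.sup' ⟨⟨0, by omega⟩, Finset.mem_univ _⟩
      (fun i => (n - 1 : ℝ) * nekEta (BPlus M) i / min (BPlus M i i - nekH (BPlus M) i) 1) := by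
    refine le_trans ?_ (Finset.le_sup'
      (f := fun i => (n - 1 : ℝ) * nekEta (BPlus M) i / min (BPlus M i i - nekH (BPlus M) i) 1)
      (Finset.mem_univ (⟨0, by omega⟩ : Fin n)))
    have hn2 : (2 : ℝ) ≤ (n : ℝ) := by exact_mod_cast hn
    refine div_nonneg (mul_nonneg (by linarith) ?_) (hpos' _).le
    exact zero_le_one.trans (one_le_nekEta _ _)
  refine (pi_norm_le_iff_of_nonneg (mul_nonneg hK0 (norm_nonneg c))).mpr ?_
  intro i
  rw [Real.norm_eq_abs]
  exact key i
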